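/- There exist an uncountable set C ⊆ ℝ and an approximating function ψ : ℕ → [0,∞) such that the series ∑_{n≥1} ψ(n) diverges and such that for every y ∈ C the set of real numbers x for which the inequality ‖n·x + y‖ < ψ(n) holds for infinitely many integers n ≥ 1 has Lebesgue measure zero. -/

import Mathlib

open MeasureTheory Filter Set

/-- Distance from a real number to the nearest integer. -/
noncomputable def nint (t : ℝ) : ℝ := |t - (round t : ℝ)|

namespace Stmt2Aux

open scoped Classical Pointwise

/-- Rapidly growing sequence of denominators. -/
def Q : ℕ → ℕ
  | 0 => 1
  | k + 1 => Q k * (4 * 2 ^ k * 2 ^ (2 * 2 ^ k * Q k))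

def b (k : ℕ) : ℕ := 2 ^ (2 * 2 ^ k * Q k)

def M (k : ℕ) : ℕ := (b k).factorial

noncomputable def δ (k : ℕ) : ℝ := 1 / (2 ^ k * Q k)

noncomputable def θ (k : ℕ) : ℝ := 1 / (2 ^ k * b k)

noncomputable def ψ (n : ℕ) : ℝ :=
  ∑ k ∈ Finset.range (n + 1), ∑ m ∈ Finset.Icc 1 (b k),
    if n * m = M k then δ k / m else 0

lemma Q_pos (k : ℕ) : 0 < Q k := by
  induction k with
  | zero => simp [Q]
  | succ k ih => exact Nat.mul_pos ih (by positivity)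

lemma Q_succ (k : ℕ) : Q (k + 1) = Q k * (4 * 2 ^ k * b k) := rfl

lemma b_pos (k : ℕ) : 0 < b k := Nat.pow_pos (by norm_num)

lemma M_pos (k : ℕ) : 0 < M k := (b k).factorial_pos

lemma exp_ge (k : ℕ) : 2 * 2 ^ k * Q k ≥ 2 := by
  have h1 := Q_pos k
  have h2 : 1 ≤ 2 ^ k := Nat.one_le_two_pow
  calc 2 = 2 * 1 * 1 := by norm_num
  _ ≤ 2 * 2 ^ k * Q k := by
      exact Nat.mul_le_mul (Nat.mul_le_mul_left 2 h2) h1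

lemma four_le_b (k : ℕ) : 4 ≤ b k := by
  have h1 : 2 ≤ 2 * 2 ^ k * Q k := exp_ge k
  calc (4 : ℕ) = 2 ^ 2 := rfl
  _ ≤ 2 ^ (2 * 2 ^ k * Q k) := Nat.pow_le_pow_right (by norm_num) h1
  _ = b k := rfl

lemma Q_dvd (j k : ℕ) (h : j ≤ k) : Q j ∣ Q k := by
  induction k with
  | zero => simp_all
  | succ k ih =>
    rcases Nat.eq_or_lt_of_le h with rfl | hlt
    · exact dvd_rfl
    · exact (ih (Nat.lt_succ_iff.mp hlt)).trans ⟨_, Q_succ k⟩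

lemma four_mul_Q_le (k : ℕ) : 4 * Q k ≤ Q (k + 1) := by
  rw [Q_succ, mul_comm (Q k)]
  have h1 : 1 ≤ 2 ^ k := Nat.one_le_two_pow
  have h2 : 1 ≤ b k := (b_pos k)
  have : 4 ≤ 4 * 2 ^ k * b k := by nlinarith
  exact Nat.mul_le_mul_right _ this

lemma Q_mono : Monotone Q :=
  monotone_nat_of_le_succ fun k => Nat.le_of_dvd (Q_pos _) ⟨_, Q_succ k⟩

lemma Q_ge (k : ℕ) : 4 ^ k ≤ Q k := by
  induction k with
  | zero => simp [Q]
  | succ k ih =>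
    calc 4 ^ (k + 1) = 4 * 4 ^ k := by ring
    _ ≤ 4 * Q k := Nat.mul_le_mul_left _ ih
    _ ≤ Q (k + 1) := four_mul_Q_le k

lemma Q_growth (j i : ℕ) : Q (j + 1) * 4 ^ i ≤ Q (j + 1 + i) := by
  induction i with
  | zero => simp
  | succ i ih =>
    have : Q (j + 1 + i) * 4 ≤ Q (j + 1 + i + 1) := by
      have := four_mul_Q_le (j + 1 + i); omega
    calc Q (j + 1) * 4 ^ (i + 1) = Q (j + 1) * 4 ^ i * 4 := by ring
    _ ≤ Q (j + 1 + i) * 4 := Nat.mul_le_mul_right 4 ih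
    _ ≤ Q (j + 1 + (i + 1)) := by rw [← Nat.add_assoc]; exact this

lemma b_mono : Monotone b := by
  apply monotone_nat_of_le_succ
  intro k
  apply Nat.pow_le_pow_right (by norm_num)
  have h1 : 2 ^ k ≤ 2 ^ (k + 1) := Nat.pow_le_pow_right (by norm_num) (by omega)
  exact Nat.mul_le_mul (Nat.mul_le_mul_left 2 h1) (Q_mono (Nat.le_succ k))

lemma b_succ_ge (k : ℕ) : b k + 2 ≤ b (k + 1) := by
  have h : 2 * 2 ^ k * Q k + 1 ≤ 2 * 2 ^ (k + 1) * Q (k + 1) := by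
    have h1 : 2 ^ k ≤ 2 ^ (k + 1) := Nat.pow_le_pow_right (by norm_num) (by omega)
    have h2 : Q k ≤ Q (k + 1) := Q_mono (Nat.le_succ k)
    have h3 := Q_pos k
    have h4 : 1 ≤ 2 ^ k := Nat.one_le_two_pow
    have h5 : 2 * 2 ^ k * Q k < 2 * (2 * 2 ^ k) * Q k := by
      have : 2 * 2 ^ k < 2 * (2 * 2 ^ k) := by omega
      exact (Nat.mul_lt_mul_right h3).mpr this
    have h6 : 2 * (2 * 2 ^ k) * Q k ≤ 2 * 2 ^ (k + 1) * Q (k + 1) := by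
      have e : 2 * 2 ^ k = 2 ^ (k + 1) := by rw [pow_succ]; ring
      rw [e]
      exact Nat.mul_le_mul_left _ h2
    omega
  have : b k * 2 ≤ b (k + 1) := by
    unfold b
    calc 2 ^ (2 * 2 ^ k * Q k) * 2 = 2 ^ (2 * 2 ^ k * Q k + 1) := by rw [pow_succ]
    _ ≤ 2 ^ (2 * 2 ^ (k + 1) * Q (k + 1)) := Nat.pow_le_pow_right (by norm_num) h
  have := four_le_b k
  omega

lemma M_mono : Monotone M := fun _ _ h => Nat.factorial_le (b_mono h)

/-- separation between blocks -/
lemma M_lt (k k' : ℕ) (h : k < k') : M k < (b k' - 1).factorial := by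
  obtain ⟨j, rfl⟩ : ∃ j, k' = j + 1 := ⟨k' - 1, by omega⟩
  have hk : k ≤ j := by omega
  have h1 : M k ≤ M j := M_mono hk
  have h2 : b j + 1 ≤ b (j + 1) - 1 := by have := b_succ_ge j; omega
  have h3 : (b j).factorial < (b j + 1).factorial :=
    Nat.factorial_lt (b_pos j) |>.mpr (by omega)
  have h4 : (b j + 1).factorial ≤ (b (j + 1) - 1).factorial := Nat.factorial_le h2
  calc M k ≤ M j := h1
  _ < (b j + 1).factorial := h3
  _ ≤ (b (j + 1) - 1).factorial := h4

lemma n_lower (k n m : ℕ) (hm1 : 1 ≤ m) (hm2 : m ≤ b k) (h : n * m = M k) :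
    (b k - 1).factorial ≤ n := by
  have hb := b_pos k
  have key : (b k - 1).factorial * b k = M k := by
    have : b k - 1 + 1 = b k := by omega
    conv_rhs => rw [M, ← this]
    rw [Nat.factorial_succ, mul_comm, this]
  have : (b k - 1).factorial * b k ≤ n * b k := by
    rw [key, ← h]
    exact Nat.mul_le_mul_left n hm2
  exact Nat.le_of_mul_le_mul_right this hb

lemma n_upper (k n m : ℕ) (hm1 : 1 ≤ m) (h : n * m = M k) : n ≤ M k := by
  calc n = n * 1 := (mul_one n).symm
  _ ≤ n * m := Nat.mul_le_mul_left n hm1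
  _ = M k := h

lemma block_unique {k k' n m m' : ℕ} (hm1 : 1 ≤ m) (hm2 : m ≤ b k) (h : n * m = M k)
    (hm1' : 1 ≤ m') (hm2' : m' ≤ b k') (h' : n * m' = M k') : k = k' := by
  rcases lt_trichotomy k k' with hlt | he | hgt
  · exfalso
    have h1 := n_upper k n m hm1 h
    have h2 := n_lower k' n m' hm1' hm2' h'
    have := M_lt k k' hlt
    omega
  · exact he
  · exfalso
    have h1 := n_upper k' n m' hm1' h'
    have h2 := n_lower k n m hm1 hm2 h
    have := M_lt k' k hgt
    omega

lemma δ_pos (k : ℕ) : 0 < δ k := by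
  have := Q_pos k
  unfold δ
  positivity

lemma θ_pos (k : ℕ) : 0 < θ k := by
  have := b_pos k
  unfold θ
  positivity

lemma ψ_nonneg (n : ℕ) : 0 ≤ ψ n := by
  apply Finset.sum_nonneg
  intro k _
  apply Finset.sum_nonneg
  intro m hm
  simp only [Finset.mem_Icc] at hm
  split
  · have := δ_pos k
    positivity
  · exact le_refl 0


lemma k_le_n {k n m : ℕ} (hm1 : 1 ≤ m) (hm2 : m ≤ b k) (h : n * m = M k) : k < n + 1 := by
  have h1 := n_lower k n m hm1 hm2 h
  have h2 : b k - 1 ≤ (b k - 1).factorial := Nat.self_le_factorial _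
  have h3 : 2 * 2 ^ k * Q k ≤ b k := (Nat.lt_pow_self (n := 2 * 2 ^ k * Q k) (a := 2) (by norm_num)).le
  have h4 : k + 1 ≤ 2 ^ k := Nat.lt_two_pow_self (n := k)
  have h5 : 2 ^ k ≤ 2 * 2 ^ k * Q k := by
    have := Q_pos k
    nlinarith
  omega

lemma ψ_eq {k n m : ℕ} (hm1 : 1 ≤ m) (hm2 : m ≤ b k) (h : n * m = M k) :
    ψ n = δ k / m := by
  have hn : 0 < n := by
    rcases Nat.eq_zero_or_pos n with rfl | h'
    · simp at h; have := M_pos k; omega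
    · exact h'
  unfold ψ
  rw [Finset.sum_eq_single_of_mem k (Finset.mem_range.mpr (k_le_n hm1 hm2 h))]
  · rw [Finset.sum_eq_single_of_mem m (Finset.mem_Icc.mpr ⟨hm1, hm2⟩)]
    · rw [if_pos h]
    · intro m' hm' hne
      rw [if_neg]
      intro hc
      exact hne (Nat.eq_of_mul_eq_mul_left hn (by rw [h, hc]))
  · intro k' _ hne
    apply Finset.sum_eq_zero
    intro m' hm'
    simp only [Finset.mem_Icc] at hm'
    rw [if_neg]
    intro hc
    exact hne (block_unique hm'.1 hm'.2 hc hm1 hm2 h)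

lemma ψ_ne_zero {n : ℕ} (h : ψ n ≠ 0) :
    ∃ k m, 1 ≤ m ∧ m ≤ b k ∧ n * m = M k := by
  by_contra hc
  push_neg at hc
  apply h
  unfold ψ
  apply Finset.sum_eq_zero
  intro k _
  apply Finset.sum_eq_zero
  intro m hm
  simp only [Finset.mem_Icc] at hm
  rw [if_neg (hc k m hm.1 hm.2)]

/-- the support block of level `k` -/
def S (k : ℕ) : Finset ℕ := (Finset.Icc 1 (b k)).image (fun m => M k / m)

lemma mem_S_elim {k n : ℕ} (h : n ∈ S k) : ∃ m, 1 ≤ m ∧ m ≤ b k ∧ n * m = M k := by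
  simp only [S, Finset.mem_image, Finset.mem_Icc] at h
  obtain ⟨m, ⟨hm1, hm2⟩, rfl⟩ := h
  refine ⟨m, hm1, hm2, ?_⟩
  exact Nat.div_mul_cancel (Nat.dvd_factorial hm1 hm2)

lemma harm_lower (k : ℕ) :
    (2:ℝ) ^ k * Q k ≤ ∑ m ∈ Finset.Icc 1 (b k), (1:ℝ) / m := by
  have h1 : Real.log ((b k : ℝ) + 1) ≤ ∑ m ∈ Finset.Icc 1 (b k), (1:ℝ) / m := by
    have h := log_add_one_le_harmonic (b k)
    have he : ((harmonic (b k) : ℚ) : ℝ) = ∑ m ∈ Finset.Icc 1 (b k), (1:ℝ) / m := by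
      rw [harmonic_eq_sum_Icc]
      push_cast
      simp [one_div]
    rw [he] at h
    convert h using 2
    push_cast
    ring
  have h2 : (2:ℝ) ^ k * Q k ≤ Real.log ((b k : ℝ) + 1) := by
    have hb : (b k : ℝ) = 2 ^ (2 * 2 ^ k * Q k) := by
      unfold b; push_cast; ring
    have h3 : Real.log ((b k : ℝ)) ≤ Real.log ((b k : ℝ) + 1) := by
      apply Real.log_le_log (by exact_mod_cast b_pos k)
      linarith
    have h4 : Real.log ((b k : ℝ)) = (2 * 2 ^ k * Q k : ℕ) * Real.log 2 := by
      rw [hb, ← Real.log_pow]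
    have h5 : (1/2 : ℝ) ≤ Real.log 2 := by
      have := Real.log_two_gt_d9
      linarith
    have h6 : ((2 * 2 ^ k * Q k : ℕ) : ℝ) * (1/2) ≤ ((2 * 2 ^ k * Q k : ℕ) : ℝ) * Real.log 2 := by
      apply mul_le_mul_of_nonneg_left h5 (by positivity)
    have h7 : ((2 * 2 ^ k * Q k : ℕ) : ℝ) * (1/2) = (2:ℝ) ^ k * Q k := by
      push_cast
      ring
    linarith
  linarith

lemma block_lower (k : ℕ) : (1:ℝ) ≤ ∑ n ∈ S k, ψ n := by
  have hinj : ∀ m ∈ Finset.Icc 1 (b k), ∀ m' ∈ Finset.Icc 1 (b k),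
      M k / m = M k / m' → m = m' := by
    intro m hm m' hm' he
    simp only [Finset.mem_Icc] at hm hm'
    have d1 : m ∣ M k := Nat.dvd_factorial hm.1 hm.2
    have d2 : m' ∣ M k := Nat.dvd_factorial hm'.1 hm'.2
    have hM := M_pos k
    rw [← Nat.div_div_self d1 (by omega), he, Nat.div_div_self d2 (by omega)]
  rw [S, Finset.sum_image hinj]
  have he : ∀ m ∈ Finset.Icc 1 (b k), ψ (M k / m) = δ k / m := by
    intro m hm
    simp only [Finset.mem_Icc] at hm
    exact ψ_eq hm.1 hm.2 (Nat.div_mul_cancel (Nat.dvd_factorial hm.1 hm.2))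
  rw [Finset.sum_congr rfl he]
  have : ∑ m ∈ Finset.Icc 1 (b k), δ k / m = δ k * ∑ m ∈ Finset.Icc 1 (b k), (1:ℝ)/m := by
    rw [Finset.mul_sum]
    apply Finset.sum_congr rfl
    intro m _
    ring
  rw [this]
  have hδ := δ_pos k
  have h1 := harm_lower k
  have h2 : δ k * ((2:ℝ) ^ k * Q k) = 1 := by
    unfold δ
    have hq := Q_pos k
    field_simp
  calc (1:ℝ) = δ k * ((2:ℝ) ^ k * Q k) := h2.symm
  _ ≤ δ k * ∑ m ∈ Finset.Icc 1 (b k), (1:ℝ)/m := by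
      apply mul_le_mul_of_nonneg_left h1 hδ.le

lemma S_disjoint : ∀ k k', k < k' → Disjoint (S k) (S k') := by
  intro k k' h
  rw [Finset.disjoint_left]
  intro n hn hn'
  obtain ⟨m, hm1, hm2, he⟩ := mem_S_elim hn
  obtain ⟨m', hm1', hm2', he'⟩ := mem_S_elim hn'
  have h1 := n_upper k n m hm1 he
  have h2 := n_lower k' n m' hm1' hm2' he'
  have := M_lt k k' h
  omega

theorem ψ_not_summable : ¬ Summable ψ := by
  intro hs
  obtain ⟨K, hK⟩ := exists_nat_gt (∑' n, ψ n)
  have hdisj : (↑(Finset.range K) : Set ℕ).PairwiseDisjoint S := by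
    intro k _ k' _ hne
    rcases lt_or_gt_of_ne hne with h | h
    · exact S_disjoint k k' h
    · exact (S_disjoint k' k h).symm
  have h1 : (K:ℝ) ≤ ∑ k ∈ Finset.range K, ∑ n ∈ S k, ψ n := by
    calc (K:ℝ) = ∑ _k ∈ Finset.range K, (1:ℝ) := by simp
    _ ≤ _ := Finset.sum_le_sum (fun k _ => block_lower k)
  have h2 : ∑ k ∈ Finset.range K, ∑ n ∈ S k, ψ n
      = ∑ n ∈ (Finset.range K).biUnion S, ψ n := (Finset.sum_biUnion hdisj).symm
  have h3 : ∑ n ∈ (Finset.range K).biUnion S, ψ n ≤ ∑' n, ψ n :=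
    Summable.sum_le_tsum _ (fun n _ => ψ_nonneg n) hs
  linarith

/-! ### The uncountable set C -/

def C : Set ℝ := {y | ∀ k, ∃ a : ℤ, |(Q k : ℝ) * y - a| ≤ θ k}

noncomputable def g (s : Set ℕ) (k : ℕ) : ℝ := if k ∈ s then ((Q (k + 1) : ℝ))⁻¹ else 0

lemma g_nonneg (s : Set ℕ) (k : ℕ) : 0 ≤ g s k := by
  unfold g; split
  · positivity
  · exact le_refl 0

lemma Qinv_le (k : ℕ) : ((Q k : ℝ))⁻¹ ≤ (1/4) ^ k := by
  rw [one_div, inv_pow]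
  apply inv_anti₀ (by positivity)
  exact_mod_cast Q_ge k

lemma g_le (s : Set ℕ) (k : ℕ) : g s k ≤ ((Q (k + 1) : ℝ))⁻¹ := by
  unfold g; split
  · exact le_refl _
  · positivity

lemma summable_g (s : Set ℕ) : Summable (g s) := by
  apply Summable.of_nonneg_of_le (g_nonneg s)
    (fun k => (g_le s k).trans (Qinv_le (k + 1)))
  exact ((summable_geometric_of_lt_one (by norm_num) (by norm_num)).comp_injective
    Nat.succ_injective)

noncomputable def F (s : Set ℕ) : ℝ := ∑' k, g s k

lemma Qinv_shift (j i : ℕ) : ((Q (i + (j + 1)) : ℝ))⁻¹ ≤ ((Q (j + 1) : ℝ))⁻¹ * (1/4) ^ i := by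
  have h := Q_growth j i
  have h2 : (Q (j + 1) : ℝ) * 4 ^ i ≤ (Q (j + 1 + i) : ℝ) := by exact_mod_cast h
  have hq1 : (0:ℝ) < Q (j + 1) := by exact_mod_cast Q_pos (j + 1)
  have hq2 : (0:ℝ) < Q (j + 1 + i) := by exact_mod_cast Q_pos (j + 1 + i)
  have he : i + (j + 1) = j + 1 + i := by omega
  rw [he]
  have h4 : (0:ℝ) < 4 ^ i := by positivity
  rw [div_pow, one_pow]
  rw [inv_le_iff_one_le_mul₀ hq2]
  have : ((Q (j+1) : ℝ))⁻¹ * (1 / 4 ^ i) * Q (j + 1 + i)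
      = Q (j + 1 + i) / ((Q (j+1) : ℝ) * 4 ^ i) := by
    field_simp
  rw [this, le_div_iff₀ (by positivity), one_mul]
  exact h2

lemma tail_bound (s : Set ℕ) (j : ℕ) :
    ∑' i, g s (i + j) ≤ (4/3) * ((Q (j + 1) : ℝ))⁻¹ := by
  have hterm : ∀ i, g s (i + j) ≤ ((Q (j + 1) : ℝ))⁻¹ * (1/4) ^ i := by
    intro i
    have h1 : g s (i + j) ≤ ((Q (i + j + 1) : ℝ))⁻¹ := g_le s (i + j)
    have h2 : i + j + 1 = i + (j + 1) := by omega
    rw [h2] at h1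
    exact h1.trans (Qinv_shift j i)
  have hsum1 : Summable (fun i => g s (i + j)) :=
    (summable_nat_add_iff j).mpr (summable_g s)
  have hsum2 : Summable (fun i : ℕ => ((Q (j + 1) : ℝ))⁻¹ * (1/4) ^ i) :=
    (summable_geometric_of_lt_one (by norm_num) (by norm_num)).mul_left _
  calc ∑' i, g s (i + j) ≤ ∑' i : ℕ, ((Q (j + 1) : ℝ))⁻¹ * (1/4) ^ i :=
        Summable.tsum_le_tsum hterm hsum1 hsum2
  _ = ((Q (j + 1) : ℝ))⁻¹ * ∑' i : ℕ, ((1:ℝ)/4) ^ i := tsum_mul_left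
  _ = ((Q (j + 1) : ℝ))⁻¹ * (4/3) := by
      rw [tsum_geometric_of_lt_one (by norm_num) (by norm_num)]
      norm_num
  _ = (4/3) * ((Q (j + 1) : ℝ))⁻¹ := by ring

lemma tail_nonneg (s : Set ℕ) (j : ℕ) : 0 ≤ ∑' i, g s (i + j) :=
  tsum_nonneg (fun i => g_nonneg s _)

lemma F_mem_C (s : Set ℕ) : F s ∈ C := by
  intro j
  have hs := summable_g s
  have hsplit := Summable.sum_add_tsum_nat_add j hs
  refine ⟨∑ i ∈ Finset.range j, if i ∈ s then ((Q j / Q (i + 1) : ℕ) : ℤ) else 0, ?_⟩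
  have key : ((∑ i ∈ Finset.range j, if i ∈ s then ((Q j / Q (i + 1) : ℕ) : ℤ) else 0 : ℤ) : ℝ)
      = (Q j : ℝ) * ∑ i ∈ Finset.range j, g s i := by
    rw [Finset.mul_sum]
    push_cast
    apply Finset.sum_congr rfl
    intro i hi
    simp only [Finset.mem_range] at hi
    unfold g
    split
    · have hdvd : (Q (i + 1) : ℤ) ∣ (Q j : ℤ) := Int.natCast_dvd_natCast.mpr (Q_dvd (i + 1) j (by omega))
      have hne : (Q (i + 1) : ℝ) ≠ 0 := by
        have := Q_pos (i + 1); positivity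
      rw [Int.cast_div_charZero hdvd]
      push_cast
      rw [div_eq_mul_inv]
    · simp
  have hT1 : 0 ≤ ∑' i, g s (i + j) := tail_nonneg s j
  have hT2 : ∑' i, g s (i + j) ≤ (4/3) * ((Q (j + 1) : ℝ))⁻¹ := tail_bound s j
  have hQj : (0:ℝ) < Q j := by exact_mod_cast Q_pos j
  have hFs : F s = ∑ i ∈ Finset.range j, g s i + ∑' i, g s (i + j) := by
    rw [F, ← hsplit]
  have hexp : (Q j : ℝ) * F s
      - (∑ i ∈ Finset.range j, if i ∈ s then ((Q j / Q (i + 1) : ℕ) : ℤ) else 0 : ℤ)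
      = (Q j : ℝ) * ∑' i, g s (i + j) := by
    rw [hFs, key]; ring
  rw [hexp, abs_of_nonneg (by positivity)]
  have hq1 : (0:ℝ) < Q (j + 1) := by exact_mod_cast Q_pos (j + 1)
  have hb : (0:ℝ) < b j := by exact_mod_cast b_pos j
  have h2j : (0:ℝ) < 2 ^ j := by positivity
  have hQsucc : (Q (j + 1) : ℝ) = (Q j : ℝ) * (4 * 2 ^ j * b j) := by
    rw [Q_succ]; push_cast; ring
  have hmul : (Q j : ℝ) * ((4/3) * ((Q (j + 1) : ℝ))⁻¹) ≤ θ j := by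
    have he : (Q j : ℝ) * ((4/3) * ((Q (j + 1) : ℝ))⁻¹) = 1 / (3 * (2 ^ j * b j)) := by
      rw [hQsucc]
      field_simp
    rw [he]
    unfold θ
    apply one_div_le_one_div_of_le (by positivity)
    nlinarith
  calc (Q j : ℝ) * ∑' i, g s (i + j) ≤ (Q j : ℝ) * ((4/3) * ((Q (j + 1) : ℝ))⁻¹) :=
        mul_le_mul_of_nonneg_left hT2 hQj.le
  _ ≤ θ j := hmul

lemma F_lt {s t : Set ℕ} (j : ℕ) (hlt : ∀ i < j, (i ∈ s ↔ i ∈ t))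
    (hjs : j ∈ s) (hjt : j ∉ t) : F t < F s := by
  have hs := summable_g s
  have ht := summable_g t
  have hFs : F s = ∑ i ∈ Finset.range (j + 1), g s i + ∑' i, g s (i + (j + 1)) := by
    rw [F, ← Summable.sum_add_tsum_nat_add (j + 1) hs]
  have hFt : F t = ∑ i ∈ Finset.range (j + 1), g t i + ∑' i, g t (i + (j + 1)) := by
    rw [F, ← Summable.sum_add_tsum_nat_add (j + 1) ht]
  have hsum : ∑ i ∈ Finset.range (j + 1), g s i
      = ∑ i ∈ Finset.range (j + 1), g t i + ((Q (j + 1) : ℝ))⁻¹ := by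
    rw [Finset.sum_range_succ, Finset.sum_range_succ]
    have h1 : ∑ i ∈ Finset.range j, g s i = ∑ i ∈ Finset.range j, g t i := by
      apply Finset.sum_congr rfl
      intro i hi
      simp only [Finset.mem_range] at hi
      unfold g
      rcases (hlt i hi) with ⟨h2, h3⟩
      by_cases hmem : i ∈ s
      · rw [if_pos hmem, if_pos (h2 hmem)]
      · rw [if_neg hmem, if_neg (fun hc => hmem (h3 hc))]
    have h2 : g s j = ((Q (j + 1) : ℝ))⁻¹ := by unfold g; rw [if_pos hjs]
    have h3 : g t j = 0 := by unfold g; rw [if_neg hjt]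
    rw [h1, h2, h3]
    ring
  have hTs : 0 ≤ ∑' i, g s (i + (j + 1)) := tail_nonneg s (j + 1)
  have hTt : ∑' i, g t (i + (j + 1)) ≤ (4/3) * ((Q (j + 2) : ℝ))⁻¹ := tail_bound t (j + 1)
  have hq1 : (0:ℝ) < Q (j + 1) := by exact_mod_cast Q_pos (j + 1)
  have hq2 : (0:ℝ) < Q (j + 2) := by exact_mod_cast Q_pos (j + 2)
  have hQ4 : (4:ℝ) * Q (j + 1) ≤ Q (j + 2) := by exact_mod_cast four_mul_Q_le (j + 1)
  have hinv : ((Q (j + 2) : ℝ))⁻¹ ≤ ((4:ℝ) * Q (j + 1))⁻¹ := inv_anti₀ (by positivity) hQ4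
  have hinv2 : (4/3 : ℝ) * ((Q (j + 2) : ℝ))⁻¹ ≤ (1/3) * ((Q (j + 1) : ℝ))⁻¹ := by
    rw [mul_inv] at hinv
    calc (4/3 : ℝ) * ((Q (j + 2) : ℝ))⁻¹ ≤ (4/3) * ((4:ℝ)⁻¹ * ((Q (j + 1) : ℝ))⁻¹) :=
          mul_le_mul_of_nonneg_left hinv (by norm_num)
    _ = (1/3) * ((Q (j + 1) : ℝ))⁻¹ := by ring
  have hpos : 0 < ((Q (j + 1) : ℝ))⁻¹ := by positivity
  rw [hFs, hFt, hsum]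
  have := hTt.trans hinv2
  linarith

lemma F_injective : Function.Injective F := by
  intro s t h
  by_contra hne
  have hex : ∃ j, ¬ (j ∈ s ↔ j ∈ t) := by
    by_contra hc
    push_neg at hc
    exact hne (Set.ext fun j => hc j)
  let j := Nat.find hex
  have hj : ¬ (j ∈ s ↔ j ∈ t) := Nat.find_spec hex
  have hmin : ∀ i < j, (i ∈ s ↔ i ∈ t) := fun i hi => not_not.mp (Nat.find_min hex hi)
  by_cases hjs : j ∈ s
  · have hjt : j ∉ t := fun h' => hj ⟨fun _ => h', fun _ => hjs⟩
    exact (F_lt j hmin hjs hjt).ne' h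
  · have hjt : j ∈ t := by
      by_contra h'
      exact hj (iff_of_false hjs h')
    exact (F_lt j (fun i hi => (hmin i hi).symm) hjt hjs).ne' h.symm

lemma C_uncountable : ¬ C.Countable := by
  intro h
  have h2 : (F ⁻¹' C).Countable := h.preimage F_injective
  have h3 : (univ : Set (Set ℕ)).Countable := h2.mono (fun s _ => F_mem_C s)
  have h4 : Countable (Set ℕ) := Set.countable_univ_iff.mp h3
  obtain ⟨f, hf⟩ := Countable.exists_injective_nat (Set ℕ)
  exact Function.cantor_injective f hf

/-! ### The measure estimate -/

noncomputable def Vset (k : ℕ) : Set ℝ :=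
  ⋃ t ∈ Finset.Icc (-2 : ℤ) ((Q k * M k : ℕ) + 2),
    Metric.closedBall ((t : ℝ) / (Q k * M k)) ((2 / 2 ^ k) / (Q k * M k))

lemma vol_V (k : ℕ) : volume (Vset k) ≤ ENNReal.ofReal (30 * (1/2) ^ k) := by
  have hQ : (0:ℝ) < Q k := by exact_mod_cast Q_pos k
  have hM : (0:ℝ) < M k := by exact_mod_cast M_pos k
  have hQ1 : (1:ℝ) ≤ Q k := by exact_mod_cast Q_pos k
  have hM1 : (1:ℝ) ≤ M k := by exact_mod_cast M_pos k
  have h2k : (0:ℝ) < 2 ^ k := by positivity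
  have hN : (0:ℝ) < (Q k : ℝ) * M k := by positivity
  have hN1 : (1:ℝ) ≤ (Q k : ℝ) * M k := by nlinarith
  have hcard : (Finset.Icc (-2 : ℤ) ((Q k * M k : ℕ) + 2)).card = Q k * M k + 5 := by
    rw [Int.card_Icc]
    omega
  calc volume (Vset k)
      ≤ ∑ t ∈ Finset.Icc (-2 : ℤ) ((Q k * M k : ℕ) + 2),
        volume (Metric.closedBall ((t : ℝ) / (Q k * M k)) ((2 / 2 ^ k) / (Q k * M k))) :=
        measure_biUnion_finset_le _ _
  _ = (Q k * M k + 5 : ℕ) • ENNReal.ofReal (2 * ((2 / 2 ^ k) / ((Q k : ℝ) * M k))) := by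
        rw [Finset.sum_congr rfl (fun t _ => Real.volume_closedBall _ _), Finset.sum_const, hcard]
  _ ≤ ENNReal.ofReal (30 * (1/2) ^ k) := by
        rw [nsmul_eq_mul, ← ENNReal.ofReal_natCast (Q k * M k + 5),
          ← ENNReal.ofReal_mul (by positivity)]
        apply ENNReal.ofReal_le_ofReal
        have hle : ((Q k * M k + 5 : ℕ) : ℝ) ≤ 6 * ((Q k : ℝ) * M k) := by
          push_cast
          nlinarith
        have he : ((Q k * M k + 5 : ℕ) : ℝ) * (2 * ((2 / 2 ^ k) / ((Q k : ℝ) * M k)))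
            = ((Q k * M k + 5 : ℕ) : ℝ) / ((Q k : ℝ) * M k) * (4 / 2 ^ k) := by
          field_simp
          ring
        rw [he]
        have h6 : ((Q k * M k + 5 : ℕ) : ℝ) / ((Q k : ℝ) * M k) ≤ 6 := by
          rw [div_le_iff₀ hN]
          nlinarith
        have hp : (30:ℝ) * ((1:ℝ)/2) ^ k = 30 / 2 ^ k := by
          rw [div_pow, one_pow, mul_one_div]
        rw [hp]
        calc ((Q k * M k + 5 : ℕ) : ℝ) / ((Q k : ℝ) * M k) * (4 / 2 ^ k)
            ≤ 6 * (4 / 2 ^ k) := mul_le_mul_of_nonneg_right h6 (by positivity)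
        _ ≤ 30 / 2 ^ k := by
            rw [mul_div_assoc']
            apply div_le_div_of_nonneg_right ?_ h2k.le
            norm_num

lemma mem_V {y : ℝ} (hy : y ∈ C) {x : ℝ} (hx : x ∈ Ico (0:ℝ) 1) {k n m : ℕ}
    (hm1 : 1 ≤ m) (hm2 : m ≤ b k) (hnm : n * m = M k)
    (hlt : nint ((n : ℝ) * x + y) < δ k / m) : x ∈ Vset k := by
  obtain ⟨a, ha⟩ := hy k
  set j := round ((n : ℝ) * x + y) with hjdef
  have hj : |(n : ℝ) * x + y - j| < δ k / m := hlt
  have hQ : (0:ℝ) < Q k := by exact_mod_cast Q_pos k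
  have hb : (0:ℝ) < b k := by exact_mod_cast b_pos k
  have hm : (0:ℝ) < m := by exact_mod_cast hm1
  have hmb : (m:ℝ) ≤ b k := by exact_mod_cast hm2
  have hM : (0:ℝ) < M k := by exact_mod_cast M_pos k
  have h2k : (0:ℝ) < 2 ^ k := by positivity
  have hQM : (0:ℝ) < (Q k : ℝ) * M k := by positivity
  set t : ℤ := (Q k : ℤ) * m * j - m * a with htdef
  have hMnm : (M k : ℝ) = (n : ℝ) * m := by exact_mod_cast hnm.symm
  have hkey : (Q k : ℝ) * M k * x - t
      = (Q k : ℝ) * m * ((n : ℝ) * x + y - j) - m * ((Q k : ℝ) * y - a) := by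
    rw [htdef, hMnm]
    push_cast
    ring
  have hδ : δ k = 1 / (2 ^ k * Q k) := rfl
  have hθ : θ k = 1 / (2 ^ k * b k) := rfl
  have habs : |(Q k : ℝ) * M k * x - t| ≤ 2 / 2 ^ k := by
    rw [hkey]
    have h1 : |(Q k : ℝ) * m * ((n : ℝ) * x + y - j)| ≤ (Q k : ℝ) * m * (δ k / m) := by
      rw [abs_mul, abs_of_nonneg (by positivity : (0:ℝ) ≤ (Q k : ℝ) * m)]
      exact mul_le_mul_of_nonneg_left hj.le (by positivity)
    have h2 : |(m : ℝ) * ((Q k : ℝ) * y - a)| ≤ (m : ℝ) * θ k := by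
      rw [abs_mul, abs_of_nonneg hm.le]
      exact mul_le_mul_of_nonneg_left ha hm.le
    have h3 : (Q k : ℝ) * m * (δ k / m) = 1 / 2 ^ k := by
      rw [hδ]
      field_simp
    have h4 : (m : ℝ) * θ k ≤ 1 / 2 ^ k := by
      rw [hθ]
      rw [mul_one_div, div_le_div_iff₀ (by positivity) (by positivity)]
      nlinarith
    calc |(Q k : ℝ) * m * ((n : ℝ) * x + y - j) - m * ((Q k : ℝ) * y - a)|
        ≤ |(Q k : ℝ) * m * ((n : ℝ) * x + y - j)| + |(m : ℝ) * ((Q k : ℝ) * y - a)| :=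
          abs_sub _ _
    _ ≤ 1 / 2 ^ k + 1 / 2 ^ k :=
        add_le_add (h1.trans_eq h3) (h2.trans h4)
    _ = 2 / 2 ^ k := by ring
  have hR2 : (2:ℝ) / 2 ^ k ≤ 2 := by
    rw [div_le_iff₀ h2k]
    have : (1:ℝ) ≤ 2 ^ k := one_le_pow₀ (by norm_num)
    nlinarith
  have hx0 : (0:ℝ) ≤ x := hx.1
  have hx1 : x < 1 := hx.2
  have htlow : (-2 : ℤ) ≤ t := by
    have h5 : (t : ℝ) ≥ (Q k : ℝ) * M k * x - 2 := by
      have := (abs_le.mp habs).2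
      linarith
    have h6 : (0:ℝ) ≤ (Q k : ℝ) * M k * x := by positivity
    have : ((-2 : ℤ) : ℝ) ≤ (t : ℝ) := by push_cast; linarith
    exact_mod_cast this
  have hthigh : t ≤ ((Q k * M k : ℕ) : ℤ) + 2 := by
    have h5 : (t : ℝ) ≤ (Q k : ℝ) * M k * x + 2 := by
      have := (abs_le.mp habs).1
      linarith
    have h6 : (Q k : ℝ) * M k * x ≤ (Q k : ℝ) * M k := by
      nlinarith
    have : (t : ℝ) ≤ ((Q k * M k : ℕ) : ℝ) + 2 := by push_cast; linarith
    exact_mod_cast this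
  apply Set.mem_biUnion (Finset.mem_Icc.mpr ⟨htlow, hthigh⟩)
  rw [Metric.mem_closedBall, Real.dist_eq]
  have he : x - (t : ℝ) / ((Q k : ℝ) * M k) = ((Q k : ℝ) * M k * x - t) / ((Q k : ℝ) * M k) := by
    field_simp
  rw [he, abs_div, abs_of_pos hQM]
  exact div_le_div_of_nonneg_right habs hQM.le

/-! ### Putting the measure part together -/

/-- The "bad" set for a given `y`. -/
def Bad (y : ℝ) : Set ℝ :=
  {x : ℝ | {n : ℕ | 1 ≤ n ∧ nint ((n : ℝ) * x + y) < ψ n}.Infinite}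

lemma exists_big {y : ℝ} (hy : y ∈ C) {x : ℝ} (hxI : x ∈ Ico (0:ℝ) 1)
    (hx : x ∈ Bad y) (K : ℕ) : ∃ k, K ≤ k ∧ x ∈ Vset k := by
  obtain ⟨n, hn, hnK⟩ := (hx.diff (Set.finite_Iic (M K))).nonempty
  simp only [Set.mem_Iic] at hnK
  obtain ⟨hn1, hn2⟩ := hn
  have hψpos : 0 < ψ n := lt_of_le_of_lt (abs_nonneg _) hn2
  obtain ⟨k, m, hm1, hm2, hnm⟩ := ψ_ne_zero (ne_of_gt hψpos)
  have hψeq : ψ n = δ k / m := ψ_eq hm1 hm2 hnm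
  have hkK : K ≤ k := by
    by_contra hc
    push_neg at hc
    have := n_upper k n m hm1 hnm
    have := M_mono (le_of_lt hc)
    omega
  refine ⟨k, hkK, mem_V hy hxI hm1 hm2 hnm ?_⟩
  rw [← hψeq]
  exact hn2

lemma null_unit {y : ℝ} (hy : y ∈ C) : volume (Bad y ∩ Ico 0 1) = 0 := by
  have hsub : ∀ K : ℕ, Bad y ∩ Ico 0 1 ⊆ ⋃ i : ℕ, Vset (K + i) := by
    intro K x ⟨hx, hxI⟩
    obtain ⟨k, hk, hxV⟩ := exists_big hy hxI hx K
    exact Set.mem_iUnion.mpr ⟨k - K, by rwa [Nat.add_sub_cancel' hk]⟩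
  have hbound : ∀ K : ℕ, volume (Bad y ∩ Ico 0 1) ≤ ENNReal.ofReal (60 * (1/2) ^ K) := by
    intro K
    have h1 : volume (Bad y ∩ Ico 0 1) ≤ ∑' i : ℕ, volume (Vset (K + i)) :=
      (measure_mono (hsub K)).trans (measure_iUnion_le _)
    have h2 : ∑' i : ℕ, volume (Vset (K + i))
        ≤ ∑' i : ℕ, ENNReal.ofReal (30 * (1/2) ^ (K + i)) :=
      ENNReal.tsum_le_tsum (fun i => vol_V (K + i))
    have hsummable : Summable (fun i : ℕ => 30 * ((1:ℝ)/2) ^ (K + i)) := by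
      simp_rw [pow_add]
      apply Summable.mul_left
      exact (summable_geometric_of_lt_one (by norm_num) (by norm_num)).mul_left _
    have h3 : ∑' i : ℕ, ENNReal.ofReal (30 * (1/2) ^ (K + i))
        = ENNReal.ofReal (∑' i : ℕ, 30 * ((1:ℝ)/2) ^ (K + i)) :=
      (ENNReal.ofReal_tsum_of_nonneg (fun i => by positivity) hsummable).symm
    have h4 : ∑' i : ℕ, 30 * ((1:ℝ)/2) ^ (K + i) = 60 * (1/2) ^ K := by
      have : ∀ i : ℕ, 30 * ((1:ℝ)/2) ^ (K + i) = (30 * ((1:ℝ)/2) ^ K) * ((1:ℝ)/2) ^ i := by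
        intro i
        rw [pow_add]
        ring
      rw [tsum_congr this, tsum_mul_left, tsum_geometric_of_lt_one (by norm_num) (by norm_num)]
      norm_num
      ring
    calc volume (Bad y ∩ Ico 0 1) ≤ ∑' i : ℕ, ENNReal.ofReal (30 * (1/2) ^ (K + i)) :=
          h1.trans h2
    _ = ENNReal.ofReal (60 * (1/2) ^ K) := by rw [h3, h4]
  have hlim : Tendsto (fun K : ℕ => ENNReal.ofReal (60 * (1/2) ^ K)) atTop (nhds 0) := by
    have h0 : Tendsto (fun K : ℕ => 60 * ((1:ℝ)/2) ^ K) atTop (nhds 0) := by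
      have := (tendsto_pow_atTop_nhds_zero_of_lt_one (by norm_num : (0:ℝ) ≤ 1/2)
        (by norm_num : (1:ℝ)/2 < 1)).const_mul (60:ℝ)
      simpa using this
    have := ENNReal.tendsto_ofReal h0
    simpa using this
  exact le_antisymm (ge_of_tendsto' hlim hbound) zero_le

lemma nint_add_int (t : ℝ) (j : ℤ) : nint (t + j) = nint t := by
  unfold nint
  rw [round_add_intCast]
  push_cast
  ring_nf

lemma Bad_shift {y : ℝ} {x : ℝ} (j : ℤ) (h : x ∈ Bad y) : x + j ∈ Bad y := by
  have he : {n : ℕ | 1 ≤ n ∧ nint ((n : ℝ) * (x + j) + y) < ψ n}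
      = {n : ℕ | 1 ≤ n ∧ nint ((n : ℝ) * x + y) < ψ n} := by
    ext n
    have : (n : ℝ) * (x + j) + y = ((n : ℝ) * x + y) + ((n * j : ℤ) : ℝ) := by
      push_cast
      ring
    simp only [Set.mem_setOf_eq, this, nint_add_int]
  show {n : ℕ | 1 ≤ n ∧ nint ((n : ℝ) * (x + j) + y) < ψ n}.Infinite
  rw [he]
  exact h

lemma null_Bad {y : ℝ} (hy : y ∈ C) : volume (Bad y) = 0 := by
  have hsub : Bad y ⊆ ⋃ j : ℤ, ((j : ℝ) +ᵥ (Bad y ∩ Ico 0 1)) := by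
    intro x hx
    refine Set.mem_iUnion.mpr ⟨⌊x⌋, ?_⟩
    refine Set.mem_vadd_set.mpr ⟨x - ⌊x⌋, ⟨?_, ?_⟩, by simp⟩
    · have h2 := Bad_shift (-⌊x⌋) hx
      push_cast at h2
      have he : x - (⌊x⌋ : ℝ) = x + -(⌊x⌋ : ℝ) := by ring
      rw [he]
      exact h2
    · exact ⟨by linarith [Int.floor_le x], by linarith [Int.lt_floor_add_one x]⟩
  apply measure_mono_null hsub
  apply measure_iUnion_null
  intro j
  rw [measure_vadd]
  exact null_unit hy

end Stmt2Aux

theorem stmt2 :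
    ∃ (C : Set ℝ) (ψ : ℕ → ℝ),
      ¬ C.Countable ∧
      (∀ n, 0 ≤ ψ n) ∧
      ¬ Summable (fun n : ℕ => ψ n) ∧
      ∀ y ∈ C,
        volume {x : ℝ |
          {n : ℕ | 1 ≤ n ∧ nint ((n : ℝ) * x + y) < ψ n}.Infinite} = 0 := by
  refine ⟨Stmt2Aux.C, Stmt2Aux.ψ, Stmt2Aux.C_uncountable, Stmt2Aux.ψ_nonneg,
    Stmt2Aux.ψ_not_summable, fun y hy => Stmt2Aux.null_Bad hy⟩
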